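/- Let a, b ∈ ℝⁿ and suppose there exist indices i ≠ j with a_i < b_i and a_j > b_j. Then the set {x ⊕ y : x, y ∈ [a, b]}, where [a, b] = {(1−t)a + tb : t ∈ [0,1]} and ⊕ is the coordinatewise maximum, contains the image of an injective affine map from the two-dimensional triangle {(s, t) ∈ ℝ² : 0 ≤ s ≤ t ≤ 1} into ℝⁿ. In particular, any subset of ℝⁿ closed under coordinatewise maximum and containing the segment [a, b] contains a two-dimensional convex subset. -/
import Mathlib

/-- If a segment `[a,b]` in `ℝⁿ` has two coordinates varying in opposite
directions, then the set of coordinatewise maxima of pairs of its points contains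
the image of an injective affine map of a two-dimensional triangle. -/
theorem sup_segment_contains_triangle {n : ℕ} (a b : Fin n → ℝ)
    (h : ∃ i j : Fin n, i ≠ j ∧ a i < b i ∧ a j > b j) :
    ∃ φ : (ℝ × ℝ) →ᵃ[ℝ] (Fin n → ℝ),
      Set.InjOn φ {p : ℝ × ℝ | 0 ≤ p.1 ∧ p.1 ≤ p.2 ∧ p.2 ≤ 1} ∧
      φ '' {p : ℝ × ℝ | 0 ≤ p.1 ∧ p.1 ≤ p.2 ∧ p.2 ≤ 1} ⊆
        {z : Fin n → ℝ | ∃ x ∈ segment ℝ a b, ∃ y ∈ segment ℝ a b, z = x ⊔ y} := by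
  obtain ⟨i, j, hij, hi, hj⟩ := h
  set φ : (ℝ × ℝ) →ᵃ[ℝ] (Fin n → ℝ) :=
    AffineMap.pi fun k =>
      (AffineMap.lineMap (a k) (b k)).comp
        (if a k < b k then AffineMap.snd else AffineMap.fst) with hφ
  have hφk : ∀ (p : ℝ × ℝ) (k : Fin n),
      φ p k = AffineMap.lineMap (a k) (b k) (if a k < b k then p.2 else p.1) := by
    intro p k
    simp only [hφ, AffineMap.pi_apply, AffineMap.comp_apply]
    split <;> simp
  refine ⟨φ, ?_, ?_⟩
  · intro p _ q _ hpq
    have h2 : p.2 = q.2 := by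
      have := congrFun hpq i
      rw [hφk, hφk, if_pos hi, if_pos hi] at this
      exact AffineMap.lineMap_injective ℝ (ne_of_lt hi) this
    have h1 : p.1 = q.1 := by
      have := congrFun hpq j
      rw [hφk, hφk, if_neg (not_lt.2 hj.le), if_neg (not_lt.2 hj.le)] at this
      exact AffineMap.lineMap_injective ℝ (ne_of_gt hj) this
    exact Prod.ext h1 h2
  · rintro z ⟨p, ⟨hp0, hp12, hp1⟩, rfl⟩
    refine ⟨AffineMap.lineMap a b p.1, ?_, AffineMap.lineMap a b p.2, ?_, ?_⟩
    · rw [segment_eq_image_lineMap]; exact ⟨p.1, ⟨hp0, hp12.trans hp1⟩, rfl⟩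
    · rw [segment_eq_image_lineMap]; exact ⟨p.2, ⟨hp0.trans hp12, hp1⟩, rfl⟩
    · funext k
      rw [Pi.sup_apply, hφk]
      have hl : ∀ t : ℝ, AffineMap.lineMap a b t k = a k + t * (b k - a k) := by
        intro t; simp [AffineMap.lineMap_apply]; ring
      rw [hl, hl]
      have hl' : ∀ t : ℝ, (AffineMap.lineMap (a k) (b k) t : ℝ) = a k + t * (b k - a k) := by
        intro t; simp [AffineMap.lineMap_apply]; ring
      rw [hl']
      rcases lt_or_ge (a k) (b k) with hk | hk
      · rw [if_pos hk, sup_eq_right.2 (by nlinarith)]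
      · rw [if_neg (not_lt.2 hk), sup_eq_left.2 (by nlinarith)]
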